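/- Let Ψ = diag(ψ_1, …, ψ_m) be a diagonal inner multiplier on H²(𝔻, ℂ^m) with ψ_i(0) ≠ 0 for every i, and let Θ ∈ H^∞(𝔻, L(ℂ^r, ℂ^m)) be any inner multiplier with r ≤ m. Then the subspace Ψ K_Θ is nearly invariant for the backward shift S*: whenever F ∈ Ψ K_Θ satisfies F(0) = 0, one has S*F ∈ Ψ K_Θ. -/

import Mathlib

noncomputable section

open scoped ENNReal ComplexConjugate
open ContinuousLinearMap

abbrev Cm (m : ℕ) := EuclideanSpace ℂ (Fin m)
abbrev H2 (m : ℕ) := lp (fun _ : ℕ => Cm m) 2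

namespace Hardy

variable {m r : ℕ}

lemma two_toReal : (2 : ℝ≥0∞).toReal = 2 := by norm_num

def shiftFun (f : ℕ → Cm m) : ℕ → Cm m := fun n => match n with
  | 0 => 0
  | k + 1 => f k

lemma shift_memℓp (f : H2 m) : Memℓp (shiftFun (f : ∀ _, Cm m)) 2 := by
  rw [memℓp_gen_iff (by norm_num)]
  have hs : Summable fun n : ℕ => ‖(f : ∀ _, Cm m) n‖ ^ (2 : ℝ≥0∞).toReal :=
    (lp.memℓp f).summable (by norm_num)
  have : Summable fun n : ℕ =>
      ‖shiftFun (f : ∀ _, Cm m) (n + 1)‖ ^ (2 : ℝ≥0∞).toReal := hs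
  exact (summable_nat_add_iff 1).mp this

/-- The forward shift `S` on the vector-valued Hardy space (Taylor-coefficient model). -/
def S (m : ℕ) : H2 m →L[ℂ] H2 m :=
  LinearMap.mkContinuous
    { toFun := fun f => ⟨shiftFun (f : ∀ _, Cm m), shift_memℓp f⟩
      map_add' := by
        intro f g
        apply Subtype.ext
        have key : shiftFun (↑(f + g) : ∀ _, Cm m)
            = shiftFun (f : ∀ _, Cm m) + shiftFun (g : ∀ _, Cm m) := by
          funext n
          have h : (shiftFun (f : ∀ _, Cm m) + shiftFun (g : ∀ _, Cm m)) n
              = shiftFun (f : ∀ _, Cm m) n + shiftFun (g : ∀ _, Cm m) n := rfl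
          rw [h, lp.coeFn_add]
          cases n with
          | zero => simp [shiftFun]
          | succ k => simp [shiftFun]
        exact key
      map_smul' := by
        intro c f
        apply Subtype.ext
        have key : shiftFun (↑(c • f) : ∀ _, Cm m)
            = c • shiftFun (f : ∀ _, Cm m) := by
          funext n
          have h : (c • shiftFun (f : ∀ _, Cm m)) n
              = c • shiftFun (f : ∀ _, Cm m) n := rfl
          rw [h, lp.coeFn_smul]
          cases n with
          | zero => simp [shiftFun]
          | succ k => simp [shiftFun]
        exact key }
    1
    (by
      intro f
      simp only [one_mul]
      apply le_of_eq
      have h2 : (0:ℝ) < (2 : ℝ≥0∞).toReal := by norm_num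
      rw [lp.norm_eq_tsum_rpow h2, lp.norm_eq_tsum_rpow h2]
      congr 1
      have hsum : Summable fun n : ℕ =>
          ‖shiftFun (f : ∀ _, Cm m) n‖ ^ (2 : ℝ≥0∞).toReal := by
        rw [← memℓp_gen_iff (by norm_num)]; exact shift_memℓp f
      have key : ∑' n : ℕ, ‖shiftFun (f : ∀ _, Cm m) n‖ ^ (2 : ℝ≥0∞).toReal
          = ∑' n : ℕ, ‖(f : ∀ _, Cm m) n‖ ^ (2 : ℝ≥0∞).toReal := by
        rw [hsum.tsum_eq_zero_add]
        simp [shiftFun]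
      exact key)

/-- The backward shift `S*` (the adjoint of the forward shift). -/
def Sadj (m : ℕ) : H2 m →L[ℂ] H2 m := ContinuousLinearMap.adjoint (S m)

/-- `T` is a multiplier (multiplication by an operator-valued analytic function),
characterized by intertwining the shifts. -/
def IsMultiplier (T : H2 r →L[ℂ] H2 m) : Prop := S m ∘L T = T ∘L S r

/-- `T` is (the multiplication operator of) an inner multiplier: an isometric multiplier. -/
def IsInnerMultiplier (T : H2 r →L[ℂ] H2 m) : Prop :=
  (∀ f, ‖T f‖ = ‖f‖) ∧ IsMultiplier T

/-- The model space `K_Θ = H² ⊖ Θ H²`. -/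
def modelSpace (T : H2 r →L[ℂ] H2 m) : Submodule ℂ (H2 m) := (LinearMap.range (T : H2 r →ₗ[ℂ] H2 m))ᗮ

/-- The constant function with value `v` (Taylor coefficients `(v,0,0,…)`). -/
def const (v : Cm m) : H2 m := lp.single 2 0 v

/-- The constant function `eᵢ`. -/
def e (m : ℕ) (i : Fin m) : H2 m := const (EuclideanSpace.single i 1)

lemma coord_norm_le (x : Cm m) (i : Fin m) : ‖x i‖ ≤ ‖x‖ := by
  rw [EuclideanSpace.norm_eq]
  have h1 : ‖x i‖ = Real.sqrt (‖x i‖ ^ 2) := by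
    rw [Real.sqrt_sq (norm_nonneg _)]
  rw [h1]
  apply Real.sqrt_le_sqrt
  exact Finset.single_le_sum (f := fun j => ‖x j‖ ^ 2)
    (fun j _ => by positivity) (Finset.mem_univ i)

lemma coord_memℓp (i : Fin m) (f : H2 m) :
    Memℓp (fun n => EuclideanSpace.single (0 : Fin 1) ((f : ∀ _, Cm m) n i)) 2 := by
  rw [memℓp_gen_iff (by norm_num)]
  have hs : Summable fun n : ℕ => ‖(f : ∀ _, Cm m) n‖ ^ (2 : ℝ≥0∞).toReal :=
    (lp.memℓp f).summable (by norm_num)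
  apply Summable.of_nonneg_of_le (fun n => by positivity) _ hs
  intro n
  have : ‖EuclideanSpace.single (0 : Fin 1) ((f : ∀ _, Cm m) n i)‖
      = ‖(f : ∀ _, Cm m) n i‖ := by
    simp [EuclideanSpace.norm_single]
  rw [this]
  have h := coord_norm_le ((f : ∀ _, Cm m) n) i
  exact Real.rpow_le_rpow (norm_nonneg _) h (by norm_num)

/-- The `i`-th coordinate (column) of a `ℂᵐ`-valued Hardy space function, as a scalar
Hardy space function. -/
def coord (i : Fin m) (f : H2 m) : H2 1 :=
  ⟨fun n => EuclideanSpace.single (0 : Fin 1) ((f : ∀ _, Cm m) n i), coord_memℓp i f⟩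

/-- A multiplier on `H²(𝔻, ℂᵐ)` is diagonal, `Ψ = diag(ψ₁, …, ψ_m)`, with scalar
multipliers `ψᵢ` represented by the operators `t i`. -/
def IsDiagonal (T : H2 m →L[ℂ] H2 m) (t : Fin m → (H2 1 →L[ℂ] H2 1)) : Prop :=
  ∀ (f : H2 m) (i : Fin m), coord i (T f) = t i (coord i f)

/-- The analytic function on the disc associated to a scalar Hardy space element. -/
def toFun (f : H2 1) (z : ℂ) : ℂ := ∑' n : ℕ, ((f : ∀ _, Cm 1) n 0) * z ^ n

/-- `F` is a finite Blaschke product on the unit disc. -/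
def IsFiniteBlaschke (F : ℂ → ℂ) : Prop :=
  ∃ (k : ℕ) (c : ℂ) (a : Fin k → ℂ), ‖c‖ = 1 ∧ (∀ i, ‖a i‖ < 1) ∧
    ∀ z ∈ Metric.ball (0 : ℂ) 1,
      F z = c * ∏ i, (z - a i) / (1 - (starRingEnd ℂ) (a i) * z)

/-- `W = M ⊖ (M ∩ zH²)`. -/
def Wspace (M : Submodule ℂ (H2 m)) : Submodule ℂ (H2 m) :=
  M ⊓ (M ⊓ LinearMap.range (S m : H2 m →ₗ[ℂ] H2 m))ᗮ

/-! ### Auxiliary lemmas -/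

open scoped InnerProductSpace

lemma S_coe (f : H2 m) : ((S m f : H2 m) : ∀ _ : ℕ, Cm m) = shiftFun (f : ∀ _, Cm m) := rfl

lemma S_norm (f : H2 m) : ‖S m f‖ = ‖f‖ := by
  have h2 : (0:ℝ) < (2 : ℝ≥0∞).toReal := by norm_num
  rw [lp.norm_eq_tsum_rpow h2, lp.norm_eq_tsum_rpow h2]
  congr 1
  have hsum : Summable fun n : ℕ =>
      ‖shiftFun (f : ∀ _, Cm m) n‖ ^ (2 : ℝ≥0∞).toReal := by
    rw [← memℓp_gen_iff (by norm_num)]; exact shift_memℓp f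
  have key : ∑' n : ℕ, ‖shiftFun (f : ∀ _, Cm m) n‖ ^ (2 : ℝ≥0∞).toReal
      = ∑' n : ℕ, ‖(f : ∀ _, Cm m) n‖ ^ (2 : ℝ≥0∞).toReal := by
    rw [hsum.tsum_eq_zero_add]
    simp [shiftFun]
  exact key

lemma adjoint_comp_self_eq_id {E F : Type*} [NormedAddCommGroup E] [InnerProductSpace ℂ E]
    [NormedAddCommGroup F] [InnerProductSpace ℂ F] [CompleteSpace E] [CompleteSpace F]
    (T : E →L[ℂ] F) (h : ∀ f, ‖T f‖ = ‖f‖) (f : E) : adjoint T (T f) = f := by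
  apply ext_inner_right ℂ
  intro v
  rw [adjoint_inner_left]
  exact LinearIsometry.inner_map_map ⟨T.toLinearMap, h⟩ f v

lemma Sadj_S (f : H2 m) : Sadj m (S m f) = f :=
  adjoint_comp_self_eq_id (S m) S_norm f

lemma modelSpace_Sadj {Θ : H2 r →L[ℂ] H2 m} (hΘ : IsMultiplier Θ) {K : H2 m}
    (hK : K ∈ modelSpace Θ) : Sadj m K ∈ modelSpace Θ := by
  rw [modelSpace, Submodule.mem_orthogonal] at hK ⊢
  rintro _ ⟨y, rfl⟩
  have h1 : ⟪Θ y, Sadj m K⟫_ℂ = ⟪S m (Θ y), K⟫_ℂ :=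
    ContinuousLinearMap.adjoint_inner_right (S m) (Θ y) K
  have h2 : S m (Θ y) = Θ (S r y) := by
    have := congrArg (fun (A : H2 r →L[ℂ] H2 m) => A y) hΘ
    exact this
  change ⟪Θ y, Sadj m K⟫_ℂ = 0
  rw [h1, h2]
  exact hK _ ⟨S r y, rfl⟩

def lshiftFun (f : ℕ → Cm m) : ℕ → Cm m := fun n => f (n + 1)

lemma lshift_memℓp (f : H2 m) : Memℓp (lshiftFun (f : ∀ _, Cm m)) 2 := by
  rw [memℓp_gen_iff (by norm_num)]
  have hs : Summable fun n : ℕ => ‖(f : ∀ _, Cm m) n‖ ^ (2 : ℝ≥0∞).toReal :=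
    (lp.memℓp f).summable (by norm_num)
  exact (summable_nat_add_iff 1).mpr hs

/-- the left shift of `f` as an element of `H2 m` -/
def lshift (f : H2 m) : H2 m := ⟨lshiftFun (f : ∀ _, Cm m), lshift_memℓp f⟩

lemma decomp (g : H2 1) :
    g = ((g : ∀ _, Cm 1) 0 0) • e 1 0 + S 1 (lshift g) := by
  apply Subtype.ext
  funext n
  have h : (↑(((g : ∀ _, Cm 1) 0 0) • e 1 0 + S 1 (lshift g)) : ∀ _, Cm 1) n
      = ((g : ∀ _, Cm 1) 0 0) • (e 1 0 : ∀ _, Cm 1) n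
        + shiftFun (lshiftFun (g : ∀ _, Cm 1)) n := by
    rw [lp.coeFn_add, lp.coeFn_smul]
    rfl
  rw [h]
  cases n with
  | zero =>
    have he : (e 1 0 : ∀ _, Cm 1) 0 = EuclideanSpace.single 0 (1 : ℂ) :=
      lp.single_apply_self 2 0 _
    rw [he]
    have : shiftFun (lshiftFun (g : ∀ _, Cm 1)) 0 = 0 := rfl
    rw [this, add_zero]
    ext j
    have hj : j = 0 := Subsingleton.elim j 0
    subst hj
    simp [EuclideanSpace.single_apply]
  | succ k =>
    have he : (e 1 0 : ∀ _, Cm 1) (k + 1) = 0 :=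
      lp.single_apply_ne 2 0 _ (Nat.succ_ne_zero k)
    rw [he, smul_zero, zero_add]
    rfl

lemma mult_coeff0 (t : H2 1 →L[ℂ] H2 1) (ht : IsMultiplier t) (g : H2 1) :
    ((t g : H2 1) : ∀ _, Cm 1) 0
      = ((g : ∀ _, Cm 1) 0 0) • ((t (e 1 0) : H2 1) : ∀ _, Cm 1) 0 := by
  conv_lhs => rw [decomp g]
  rw [map_add, map_smul]
  have ht' : t (S 1 (lshift g)) = S 1 (t (lshift g)) := by
    have h1 := congrArg (fun (A : H2 1 →L[ℂ] H2 1) => A (lshift g)) ht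
    exact h1.symm
  rw [ht']
  have h : (↑(((g : ∀ _, Cm 1) 0 0) • t (e 1 0) + S 1 (t (lshift g))) : ∀ _, Cm 1) 0
      = ((g : ∀ _, Cm 1) 0 0) • ((t (e 1 0) : H2 1) : ∀ _, Cm 1) 0
        + shiftFun ((t (lshift g) : H2 1) : ∀ _, Cm 1) 0 := by
    rw [lp.coeFn_add, lp.coeFn_smul]
    rfl
  rw [h]
  have : shiftFun ((t (lshift g) : H2 1) : ∀ _, Cm 1) 0 = 0 := rfl
  rw [this, add_zero]

lemma coord_coe (i : Fin m) (f : H2 m) (n : ℕ) :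
    ((coord i f : H2 1) : ∀ _, Cm 1) n
      = EuclideanSpace.single (0 : Fin 1) ((f : ∀ _, Cm m) n i) := rfl

end Hardy
open Hardy in
/-- If `Ψ = diag(ψ₁, …, ψ_m)` is a diagonal inner multiplier with `ψᵢ(0) ≠ 0` for all `i`
and `Θ : H²(ℂ^r) → H²(ℂᵐ)` is any inner multiplier with `r ≤ m`, then `Ψ K_Θ` is nearly
invariant for the backward shift `S*`. -/
theorem stmt_6 (m r : ℕ) (hr : r ≤ m)
    (Ψ : H2 m →L[ℂ] H2 m) (ψ : Fin m → (H2 1 →L[ℂ] H2 1))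
    (hΨ : IsInnerMultiplier Ψ) (hdiag : IsDiagonal Ψ ψ)
    (hψ : ∀ i, IsInnerMultiplier (ψ i))
    (hψ0 : ∀ i, ((ψ i (e 1 0) : H2 1) : ∀ _ : ℕ, Cm 1) 0 ≠ 0)
    (Θ : H2 r →L[ℂ] H2 m) (hΘ : IsInnerMultiplier Θ) :
    ∀ F ∈ (modelSpace Θ).map (Ψ : H2 m →ₗ[ℂ] H2 m), (F : ∀ _ : ℕ, Cm m) 0 = 0 →
      Sadj m F ∈ (modelSpace Θ).map (Ψ : H2 m →ₗ[ℂ] H2 m) := by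
  intro F hF hF0
  obtain ⟨K, hK, rfl⟩ := hF
  -- the zeroth Taylor coefficient of K vanishes
  have hK0 : ∀ i : Fin m, ((K : H2 m) : ∀ _, Cm m) 0 i = 0 := by
    intro i
    have h1 := congrArg (fun f : H2 1 => (f : ∀ _, Cm 1) 0) (hdiag K i)
    simp only at h1
    rw [coord_coe, mult_coeff0 (ψ i) (hψ i).2 (coord i K), coord_coe] at h1
    have hzero : ((Ψ K : H2 m) : ∀ _, Cm m) 0 i = 0 := by
      have := congrArg (fun x : Cm m => x i) hF0
      exact this
    rw [hzero] at h1
    have hsingle0 : EuclideanSpace.single (0 : Fin 1) (0 : ℂ) = 0 := by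
      ext j
      have hj : j = 0 := Subsingleton.elim j 0
      subst hj
      rw [EuclideanSpace.single_apply]
      simp
    rw [hsingle0] at h1
    have hcoeff : EuclideanSpace.single (0 : Fin 1) (((K : H2 m) : ∀ _, Cm m) 0 i) 0
        = ((K : H2 m) : ∀ _, Cm m) 0 i := by
      rw [EuclideanSpace.single_apply]; simp
    have h2 : (((K : H2 m) : ∀ _, Cm m) 0 i)
        • ((ψ i (e 1 0) : H2 1) : ∀ _, Cm 1) 0 = 0 := by
      rw [hcoeff] at h1
      exact h1.symm
    rcases smul_eq_zero.mp h2 with hc | hc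
    · exact hc
    · exact absurd hc (hψ0 i)
  -- K = S G with G the left shift of K
  have hSG : S m (lshift K) = K := by
    apply Subtype.ext
    funext n
    rw [S_coe]
    cases n with
    | zero =>
      show (0 : Cm m) = (K : ∀ _, Cm m) 0
      ext i
      exact (hK0 i).symm
    | succ k => rfl
  -- conclude
  have hmul : Ψ (S m (lshift K)) = S m (Ψ (lshift K)) := by
    have h1 := congrArg (fun (A : H2 m →L[ℂ] H2 m) => A (lshift K)) hΨ.2
    exact h1.symm
  have hfinal : Sadj m (Ψ K) = Ψ (lshift K) := by
    conv_lhs => rw [← hSG, hmul, Sadj_S]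
  have hGmem : lshift K ∈ modelSpace Θ := by
    have hG : lshift K = Sadj m K := by conv_rhs => rw [← hSG, Sadj_S]
    rw [hG]
    exact modelSpace_Sadj hΘ.2 hK
  exact Submodule.mem_map.mpr ⟨lshift K, hGmem, hfinal.symm⟩
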